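/- arXiv:2006.02983 — 3 statements merged into one kernel-verified Lean document; each statement's English description precedes it below -/
import Mathlib

section
/- Let G, g : ℝ^k → ℝ be convex functions that are differentiable at all points. Suppose G is m-strongly convex for some m > 0 (i.e., ω ↦ G(ω) − (m/2)‖ω‖₂² is convex), ω₁ is a minimizer of G over ℝ^k, ω₂ is a minimizer of G + g over ℝ^k, and ‖∇g(ω)‖₂ ≤ g₁ for all ω ∈ ℝ^k. Then ‖ω₁ − ω₂‖₂ ≤ g₁/m. -/
open Set Filter Topology RealInnerProductSpace

/-- First-order condition: a convex differentiable function lies above its tangent. -/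
lemma convexOn_first_order {F : Type*} [NormedAddCommGroup F] [NormedSpace ℝ F]
    {f : F → ℝ} {f' : F →L[ℝ] ℝ} {x : F} (hconv : ConvexOn ℝ Set.univ f)
    (hf : HasFDerivAt f f' x) (y : F) : f' (y - x) ≤ f y - f x := by
  set v := y - x with hv
  set φ : ℝ → ℝ := fun t => f (x + t • v) with hφ
  have hderiv : HasDerivAt φ (f' v) 0 := by
    have hline : HasDerivAt (fun t : ℝ => x + t • v) v 0 := by
      simpa using ((hasDerivAt_id (0 : ℝ)).smul_const v).const_add x
    have hx : HasFDerivAt f f' (x + (0 : ℝ) • v) := by simpa using hf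
    exact hx.comp_hasDerivAt 0 hline
  have hslope : ∀ᶠ t in 𝓝[>] (0 : ℝ), slope φ 0 t ≤ f y - f x := by
    filter_upwards [Ioc_mem_nhdsGT_of_mem (Set.left_mem_Ico.2 one_pos)] with t ht
    have ht0 : 0 < t := ht.1
    have ht1 : t ≤ 1 := ht.2
    have hc : φ t ≤ (1 - t) * f x + t * f y := by
      have := hconv.2 (Set.mem_univ x) (Set.mem_univ y) (by linarith : (0:ℝ) ≤ 1 - t)
        ht0.le (by ring)
      have hpt : (1 - t) • x + t • y = x + t • v := by
        simp [hv, smul_sub, sub_smul]; abel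
      simpa [hpt] using this
    have hφ0 : φ 0 = f x := by simp [hφ]
    rw [slope_def_field, hφ0, sub_zero, div_le_iff₀ ht0]
    nlinarith
  have htend : Tendsto (slope φ 0) (𝓝[>] (0:ℝ)) (𝓝 (f' v)) :=
    (hasDerivAt_iff_tendsto_slope.1 hderiv).mono_left
      (nhdsWithin_mono _ (fun t ht => ne_of_gt ht))
  exact le_of_tendsto htend hslope

/-- Monotonicity of the differential of a convex function. -/
lemma convexOn_monotone_fderiv {F : Type*} [NormedAddCommGroup F] [NormedSpace ℝ F]
    {f : F → ℝ} {f'x f'y : F →L[ℝ] ℝ} {x y : F} (hconv : ConvexOn ℝ Set.univ f)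
    (hx : HasFDerivAt f f'x x) (hy : HasFDerivAt f f'y y) :
    0 ≤ f'x (x - y) - f'y (x - y) := by
  have h1 := convexOn_first_order hconv hx y
  have h2 := convexOn_first_order hconv hy x
  have : f'x (y - x) = - f'x (x - y) := by rw [← map_neg]; congr 1; abel
  have : f'y (x - y) ≤ f x - f y := h2
  have h1' : - f'x (x - y) ≤ f y - f x := by
    rw [← map_neg]; simpa [neg_sub] using h1
  linarith

/-- Lemma 1 (perturbation of strongly convex minimizers): if `G` is convex,
differentiable and `m`-strongly convex, `g` is convex and differentiable with
`‖∇g‖₂ ≤ g₁` everywhere, `ω₁` minimizes `G` and `ω₂` minimizes `G + g`, then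
`‖ω₁ − ω₂‖₂ ≤ g₁ / m`. -/
theorem strongly_convex_perturbation {k : ℕ}
    (G g : EuclideanSpace ℝ (Fin k) → ℝ)
    (hGconv : ConvexOn ℝ Set.univ G) (hgconv : ConvexOn ℝ Set.univ g)
    (hGdiff : Differentiable ℝ G) (hgdiff : Differentiable ℝ g)
    (m : ℝ) (hm : 0 < m)
    (hGstrong : ConvexOn ℝ Set.univ (fun ω => G ω - m / 2 * ‖ω‖ ^ 2))
    (g₁ : ℝ) (hgrad : ∀ ω, ‖gradient g ω‖ ≤ g₁)
    (ω₁ ω₂ : EuclideanSpace ℝ (Fin k))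
    (hω₁ : IsMinOn G Set.univ ω₁)
    (hω₂ : IsMinOn (fun ω => G ω + g ω) Set.univ ω₂) :
    ‖ω₁ - ω₂‖ ≤ g₁ / m := by
  set d : EuclideanSpace ℝ (Fin k) := ω₁ - ω₂ with hd
  clear_value d
  -- fderiv of G vanishes at ω₁
  have hG'1 : fderiv ℝ G ω₁ = 0 :=
    (hω₁.isLocalMin univ_mem).fderiv_eq_zero
  -- fderiv of G + g vanishes at ω₂
  have hGg : fderiv ℝ (fun ω => G ω + g ω) ω₂ = 0 :=
    (hω₂.isLocalMin univ_mem).fderiv_eq_zero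
  have hsum : fderiv ℝ (fun ω => G ω + g ω) ω₂ = fderiv ℝ G ω₂ + fderiv ℝ g ω₂ :=
    fderiv_add (hGdiff ω₂) (hgdiff ω₂)
  have hG'2 : fderiv ℝ G ω₂ = - fderiv ℝ g ω₂ := by
    rw [hsum] at hGg; exact eq_neg_of_add_eq_zero_left hGg
  -- derivative of the strongly convex part
  have hH : ∀ ω : EuclideanSpace ℝ (Fin k), HasFDerivAt (fun ω => G ω - m / 2 * ‖ω‖ ^ 2)
      (fderiv ℝ G ω - (m/2) • (2 • innerSL ℝ ω)) ω := by
    intro ω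
    have h2 : HasFDerivAt (fun ω : EuclideanSpace ℝ (Fin k) => ‖ω‖ ^ 2) (2 • innerSL ℝ ω) ω := by
      simpa using (hasFDerivAt_id ω).norm_sq
    exact (hGdiff ω).hasFDerivAt.sub (h2.const_mul (m/2))
  have hmono := convexOn_monotone_fderiv hGstrong (hH ω₁) (hH ω₂)
  have hinner : (m : ℝ) * ⟪d, d⟫ ≤ (fderiv ℝ g ω₂) d := by
    have hexp : (fderiv ℝ G ω₁ - (m/2) • (2 • innerSL ℝ ω₁)) d
        - (fderiv ℝ G ω₂ - (m/2) • (2 • innerSL ℝ ω₂)) d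
        = (fderiv ℝ g ω₂) d - m * ⟪d, d⟫ := by
      simp only [hG'1, hG'2, ContinuousLinearMap.sub_apply, ContinuousLinearMap.smul_apply,
        ContinuousLinearMap.zero_apply, ContinuousLinearMap.neg_apply, smul_eq_mul,
        nsmul_eq_mul, Nat.cast_ofNat]
      have h : (innerSL ℝ ω₁) d - (innerSL ℝ ω₂) d = ⟪d, d⟫ := by
        simp only [innerSL_apply_apply, ← inner_sub_left]
        rw [← hd]
      linear_combination (-m) * h
    rw [← hd] at hmono
    linarith [hmono, hexp]
  -- bound the right side
  have hbound : (fderiv ℝ g ω₂) d ≤ g₁ * ‖d‖ := by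
    have h1 : (fderiv ℝ g ω₂) d ≤ ‖fderiv ℝ g ω₂‖ * ‖d‖ :=
      le_trans (le_abs_self _) ((fderiv ℝ g ω₂).le_opNorm d)
    have h2 : ‖fderiv ℝ g ω₂‖ = ‖gradient g ω₂‖ := by
      rw [gradient]
      exact ((InnerProductSpace.toDual ℝ (EuclideanSpace ℝ (Fin k))).symm.norm_map _).symm
    have h3 : ‖fderiv ℝ g ω₂‖ ≤ g₁ := h2 ▸ hgrad ω₂
    exact h1.trans (mul_le_mul_of_nonneg_right h3 (norm_nonneg d))
  have hsq : m * ‖d‖ ^ 2 ≤ g₁ * ‖d‖ := by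
    have := hinner.trans hbound
    rwa [real_inner_self_eq_norm_sq] at this
  have hg₁ : 0 ≤ g₁ := (norm_nonneg _).trans (hgrad ω₂)
  rw [le_div_iff₀ hm]
  rcases eq_or_lt_of_le (norm_nonneg d) with h0 | h0
  · rw [← h0]; simpa using hg₁
  · nlinarith
end

section
/- Let γ > 0, λ > 0, n ≥ 1, ε > 0, α ∈ (0,1), and let X_1,…,X_n ∈ ℝ^d with ‖X_i‖₁ ≤ 1 and Y_1,…,Y_n ∈ ℝ. Set G(μ,β) = F_γ(μ,β) + (λ/2)‖β‖₂² + μ²/√n. Let b ∈ ℝ^{d+1} satisfy ‖b‖₁ ≤ 4(d+1)·log((d+1)/α)/ε. If ω₁ = (μ₁,β₁) minimizes G over ℝ × ℝ^d and ω₂ = (μ₂,β₂) minimizes G(μ,β) + ⟨b,(μ,β)⟩/n over ℝ × ℝ^d, then ‖ω₁ − ω₂‖₂ ≤ 4(d+1)·log((d+1)/α) / (n·min(λ, 2/√n)·ε). -/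
open scoped BigOperators

/-- The Huber function `ρ_γ`. -/
noncomputable def huber (γ t : ℝ) : ℝ :=
  if |t| ≤ γ then t ^ 2 / (2 * γ) else |t| - γ / 2

/-- The smoothed median-regression loss
`F_γ(μ,β) = (1/n) Σ_{i=1}^n ρ_γ(μ + ⟨X_i,β⟩ − Y_i)`. -/
noncomputable def smoothedLoss {n d : ℕ} (γ : ℝ) (X : Fin n → Fin d → ℝ)
    (Y : Fin n → ℝ) (p : ℝ × (Fin d → ℝ)) : ℝ :=
  (1 / (n : ℝ)) * ∑ i, huber γ (p.1 + (∑ j, X i j * p.2 j) - Y i)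

lemma huber_lower {γ : ℝ} (hγ : 0 < γ) {a : ℝ} (ha : |a| ≤ 1) (s : ℝ) :
    a * s - γ * a ^ 2 / 2 ≤ huber γ s := by
  unfold huber
  split_ifs with h
  · have key : s ^ 2 / (2 * γ) - (a * s - γ * a ^ 2 / 2) = (s - γ * a) ^ 2 / (2 * γ) := by
      field_simp; ring
    nlinarith [div_nonneg (sq_nonneg (s - γ * a)) (by linarith : (0:ℝ) ≤ 2 * γ)]
  · push_neg at h
    have h1 : a * s ≤ |a| * |s| := by
      calc a * s ≤ |a * s| := le_abs_self _
        _ = |a| * |s| := abs_mul a s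
    have h2 : a ^ 2 = |a| ^ 2 := (sq_abs a).symm
    nlinarith [mul_nonneg (sub_nonneg.2 h.le) (sub_nonneg.2 ha),
      mul_nonneg hγ.le (sq_nonneg (1 - |a|)), abs_nonneg a]

lemma huber_eq_rep {γ : ℝ} (hγ : 0 < γ) (s : ℝ) :
    ∃ a : ℝ, |a| ≤ 1 ∧ huber γ s = a * s - γ * a ^ 2 / 2 := by
  by_cases h : |s| ≤ γ
  · refine ⟨s / γ, ?_, ?_⟩
    · rw [abs_div, abs_of_pos hγ, div_le_one hγ]; exact h
    · unfold huber; rw [if_pos h]; field_simp; ring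
  · push_neg at h
    have hs0 : s ≠ 0 := by intro h0; rw [h0, abs_zero] at h; linarith
    have habs : |s| ≠ 0 := abs_ne_zero.2 hs0
    refine ⟨s / |s|, ?_, ?_⟩
    · rw [abs_div, abs_abs, div_self habs]
    · unfold huber; rw [if_neg (not_le.2 h)]
      have h2 : s / |s| * s = |s| := by
        rw [div_mul_eq_mul_div, ← sq, ← sq_abs, sq, mul_div_assoc, div_self habs, mul_one]
      have h3 : (s / |s|) ^ 2 = 1 := by
        rw [div_pow, sq_abs, div_self (pow_ne_zero 2 hs0)]
      rw [h2, h3]; ring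

lemma huber_convex_pt {γ : ℝ} (hγ : 0 < γ) {t : ℝ} (ht0 : 0 ≤ t) (ht1 : t ≤ 1) (x y : ℝ) :
    huber γ ((1 - t) * x + t * y) ≤ (1 - t) * huber γ x + t * huber γ y := by
  obtain ⟨a, ha, hrep⟩ := huber_eq_rep hγ ((1 - t) * x + t * y)
  have hx := huber_lower hγ ha x
  have hy := huber_lower hγ ha y
  rw [hrep]
  nlinarith [mul_le_mul_of_nonneg_left hx (by linarith : (0:ℝ) ≤ 1 - t),
    mul_le_mul_of_nonneg_left hy ht0]

lemma loss_convex {n d : ℕ} {γ : ℝ} (hγ : 0 < γ) (X : Fin n → Fin d → ℝ) (Y : Fin n → ℝ)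
    {t : ℝ} (ht0 : 0 ≤ t) (ht1 : t ≤ 1) (p q : ℝ × (Fin d → ℝ)) :
    smoothedLoss γ X Y ((1 - t) * p.1 + t * q.1, fun j => (1 - t) * p.2 j + t * q.2 j) ≤
      (1 - t) * smoothedLoss γ X Y p + t * smoothedLoss γ X Y q := by
  unfold smoothedLoss
  have key : ∀ i, huber γ (((1 - t) * p.1 + t * q.1)
        + (∑ j, X i j * ((1 - t) * p.2 j + t * q.2 j)) - Y i)
      ≤ (1 - t) * huber γ (p.1 + (∑ j, X i j * p.2 j) - Y i)
        + t * huber γ (q.1 + (∑ j, X i j * q.2 j) - Y i) := by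
    intro i
    have hsum : (∑ j, X i j * ((1 - t) * p.2 j + t * q.2 j)) =
        (1 - t) * (∑ j, X i j * p.2 j) + t * (∑ j, X i j * q.2 j) := by
      rw [Finset.mul_sum, Finset.mul_sum, ← Finset.sum_add_distrib]
      exact Finset.sum_congr rfl fun j _ => by ring
    have harg : ((1 - t) * p.1 + t * q.1)
          + (∑ j, X i j * ((1 - t) * p.2 j + t * q.2 j)) - Y i =
        (1 - t) * (p.1 + (∑ j, X i j * p.2 j) - Y i)
          + t * (q.1 + (∑ j, X i j * q.2 j) - Y i) := by
      rw [hsum]; ring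
    rw [harg]
    exact huber_convex_pt hγ ht0 ht1 _ _
  have hn0 : (0:ℝ) ≤ 1 / (n:ℝ) := by positivity
  calc (1 / (n:ℝ)) * ∑ i, huber γ (((1 - t) * p.1 + t * q.1)
          + (∑ j, X i j * ((1 - t) * p.2 j + t * q.2 j)) - Y i)
      ≤ (1 / (n:ℝ)) * ∑ i, ((1 - t) * huber γ (p.1 + (∑ j, X i j * p.2 j) - Y i)
          + t * huber γ (q.1 + (∑ j, X i j * q.2 j) - Y i)) :=
        mul_le_mul_of_nonneg_left (Finset.sum_le_sum fun i _ => key i) hn0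
    _ = (1 - t) * ((1 / (n:ℝ)) * ∑ i, huber γ (p.1 + (∑ j, X i j * p.2 j) - Y i))
          + t * ((1 / (n:ℝ)) * ∑ i, huber γ (q.1 + (∑ j, X i j * q.2 j) - Y i)) := by
        rw [Finset.sum_add_distrib, ← Finset.mul_sum, ← Finset.mul_sum]; ring

noncomputable def Gfun {n d : ℕ} (γ lam : ℝ) (X : Fin n → Fin d → ℝ) (Y : Fin n → ℝ)
    (p : ℝ × (Fin d → ℝ)) : ℝ :=
  smoothedLoss γ X Y p + lam / 2 * ∑ j, (p.2 j) ^ 2 + p.1 ^ 2 / Real.sqrt n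

noncomputable def Lfun {d : ℕ} (b : Fin (d + 1) → ℝ) (p : ℝ × (Fin d → ℝ)) : ℝ :=
  b 0 * p.1 + ∑ j : Fin d, b j.succ * p.2 j

lemma strong_conv_min {n d : ℕ} (hn : 1 ≤ n) {γ lam : ℝ} (hγ : 0 < γ) (hlam : 0 < lam)
    (X : Fin n → Fin d → ℝ) (Y : Fin n → ℝ) (b : Fin (d + 1) → ℝ) (c : ℝ)
    (p q : ℝ × (Fin d → ℝ))
    (hmin : ∀ r, Gfun γ lam X Y p + c * Lfun b p ≤ Gfun γ lam X Y r + c * Lfun b r) :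
    min lam (2 / Real.sqrt n) / 2 * ((p.1 - q.1) ^ 2 + ∑ j, (p.2 j - q.2 j) ^ 2)
      ≤ (Gfun γ lam X Y q + c * Lfun b q) - (Gfun γ lam X Y p + c * Lfun b p) := by
  have hn0 : (0:ℝ) < n := by exact_mod_cast hn
  have hsn : 0 < Real.sqrt n := Real.sqrt_pos.2 hn0
  set m := min lam (2 / Real.sqrt (n:ℝ)) with hm_def
  have hm : 0 < m := lt_min hlam (by positivity)
  set Sd := ∑ j, (p.2 j - q.2 j) ^ 2 with hSd
  have hSd0 : 0 ≤ Sd := Finset.sum_nonneg fun j _ => sq_nonneg _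
  set D := (p.1 - q.1) ^ 2 + Sd with hD
  have hD0 : 0 ≤ D := by rw [hD]; exact add_nonneg (sq_nonneg _) hSd0
  -- strong convexity modulus bound
  have hK : m / 2 * D ≤ lam / 2 * Sd + (p.1 - q.1) ^ 2 / Real.sqrt n := by
    have h1 : m ≤ lam := min_le_left _ _
    have h2 : m ≤ 2 / Real.sqrt (n:ℝ) := min_le_right _ _
    have h3 : m / 2 * (p.1 - q.1) ^ 2 ≤ (p.1 - q.1) ^ 2 / Real.sqrt n := by
      have hm2 : m / 2 ≤ 1 / Real.sqrt (n:ℝ) := by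
        rw [div_le_div_iff₀ (by norm_num : (0:ℝ) < 2) hsn]
        have := (le_div_iff₀ hsn).1 h2
        linarith
      calc m / 2 * (p.1 - q.1) ^ 2 ≤ (1 / Real.sqrt (n:ℝ)) * (p.1 - q.1) ^ 2 :=
            mul_le_mul_of_nonneg_right hm2 (sq_nonneg _)
        _ = (p.1 - q.1) ^ 2 / Real.sqrt n := by rw [one_div, inv_mul_eq_div]
    have h4 : m / 2 * Sd ≤ lam / 2 * Sd :=
      mul_le_mul_of_nonneg_right (by linarith) hSd0
    rw [hD, mul_add]; linarith
  have hstep : ∀ t : ℝ, 0 < t → t < 1 →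
      (1 - t) * (lam / 2 * Sd + (p.1 - q.1) ^ 2 / Real.sqrt n) ≤
        (Gfun γ lam X Y q + c * Lfun b q) - (Gfun γ lam X Y p + c * Lfun b p) := by
    intro t ht0 ht1
    have hGr := hmin ((1 - t) * p.1 + t * q.1, fun j => (1 - t) * p.2 j + t * q.2 j)
    have hloss := loss_convex hγ X Y ht0.le ht1.le p q
    simp only [Gfun, Lfun] at hGr ⊢
    have hquadsum : ∑ j, ((1 - t) * p.2 j + t * q.2 j) ^ 2 =
        (1 - t) * ∑ j, (p.2 j) ^ 2 + t * ∑ j, (q.2 j) ^ 2 - t * (1 - t) * Sd := by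
      rw [hSd, Finset.mul_sum, Finset.mul_sum, Finset.mul_sum, ← Finset.sum_add_distrib,
        ← Finset.sum_sub_distrib]
      exact Finset.sum_congr rfl fun j _ => by ring
    have hlin : ∑ j : Fin d, b j.succ * ((1 - t) * p.2 j + t * q.2 j) =
        (1 - t) * ∑ j : Fin d, b j.succ * p.2 j + t * ∑ j : Fin d, b j.succ * q.2 j := by
      rw [Finset.mul_sum, Finset.mul_sum, ← Finset.sum_add_distrib]
      exact Finset.sum_congr rfl fun j _ => by ring
    rw [hquadsum, hlin,
      show ((1 - t) * p.1 + t * q.1) ^ 2 / Real.sqrt (n:ℝ) =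
        (1 - t) * (p.1 ^ 2 / Real.sqrt (n:ℝ)) + t * (q.1 ^ 2 / Real.sqrt (n:ℝ))
          - t * (1 - t) * ((p.1 - q.1) ^ 2 / Real.sqrt (n:ℝ)) from by ring] at hGr
    refine le_of_mul_le_mul_left ?_ ht0
    nlinarith [hGr, hloss]
  -- pass to the limit t → 0
  have hC0 : 0 ≤ (Gfun γ lam X Y q + c * Lfun b q) - (Gfun γ lam X Y p + c * Lfun b p) :=
    sub_nonneg.2 (hmin q)
  set C := (Gfun γ lam X Y q + c * Lfun b q) - (Gfun γ lam X Y p + c * Lfun b p) with hCdef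
  have hstep2 : ∀ t : ℝ, 0 < t → t < 1 → (1 - t) * (m / 2 * D) ≤ C := fun t h1 h2 =>
    le_trans (mul_le_mul_of_nonneg_left hK (by linarith)) (hstep t h1 h2)
  by_contra hcon
  push_neg at hcon
  have hc0pos : 0 < m / 2 * D := lt_of_le_of_lt hC0 hcon
  set t0 := (m / 2 * D - C) / (2 * (m / 2 * D)) with ht0def
  have ht0pos : 0 < t0 := div_pos (by linarith) (by linarith)
  have ht0lt : t0 < 1 := by
    rw [ht0def, div_lt_one (by linarith)]; linarith
  have hfin := hstep2 t0 ht0pos ht0lt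
  have ht0c0 : t0 * (m / 2 * D) = (m / 2 * D - C) / 2 := by
    rw [ht0def, div_mul_eq_mul_div, mul_comm (2:ℝ) (m / 2 * D), ← div_div,
      mul_div_assoc, div_self (ne_of_gt hc0pos), mul_one]
  nlinarith [hfin, ht0c0]

/-- Accuracy bound for Algorithm 1: if `ω₁` minimizes
`G(μ,β) = F_γ(μ,β) + (λ/2)‖β‖₂² + μ²/√n` and `ω₂` minimizes
`G(μ,β) + ⟨b,(μ,β)⟩/n` where `‖b‖₁ ≤ 4(d+1)·log((d+1)/α)/ε`, then
`‖ω₁ − ω₂‖₂ ≤ 4(d+1)·log((d+1)/α) / (n·min(λ, 2/√n)·ε)`. -/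
theorem algorithm1_accuracy {n d : ℕ} (hn : 1 ≤ n)
    (γ lam ε α : ℝ) (hγ : 0 < γ) (hlam : 0 < lam) (hε : 0 < ε)
    (hα : α ∈ Set.Ioo (0 : ℝ) 1)
    (X : Fin n → Fin d → ℝ) (hX : ∀ i, ∑ j, |X i j| ≤ 1) (Y : Fin n → ℝ)
    (b : Fin (d + 1) → ℝ)
    (hb : ∑ i, |b i| ≤ 4 * (d + 1) * Real.log ((d + 1) / α) / ε)
    (ω₁ ω₂ : ℝ × (Fin d → ℝ))
    (hω₁ : IsMinOn
      (fun p : ℝ × (Fin d → ℝ) =>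
        smoothedLoss γ X Y p + lam / 2 * ∑ j, (p.2 j) ^ 2
          + p.1 ^ 2 / Real.sqrt n)
      Set.univ ω₁)
    (hω₂ : IsMinOn
      (fun p : ℝ × (Fin d → ℝ) =>
        (smoothedLoss γ X Y p + lam / 2 * ∑ j, (p.2 j) ^ 2
            + p.1 ^ 2 / Real.sqrt n)
          + (b 0 * p.1 + ∑ j : Fin d, b j.succ * p.2 j) / n)
      Set.univ ω₂) :
    Real.sqrt ((ω₁.1 - ω₂.1) ^ 2 + ∑ j, (ω₁.2 j - ω₂.2 j) ^ 2) ≤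
      4 * (d + 1) * Real.log ((d + 1) / α)
        / (n * min lam (2 / Real.sqrt n) * ε) := by
  have hnpos : (0:ℝ) < n := by exact_mod_cast hn
  set m := min lam (2 / Real.sqrt (n:ℝ)) with hm_def
  have hsn : 0 < Real.sqrt n := Real.sqrt_pos.2 hnpos
  have hm : 0 < m := lt_min hlam (by positivity)
  set D := (ω₁.1 - ω₂.1) ^ 2 + ∑ j, (ω₁.2 j - ω₂.2 j) ^ 2 with hD
  have hD0 : 0 ≤ D := by rw [hD]; positivity
  have h1 : ∀ r, Gfun γ lam X Y ω₁ + 0 * Lfun b ω₁ ≤ Gfun γ lam X Y r + 0 * Lfun b r := by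
    intro r
    simp only [zero_mul, add_zero]
    exact isMinOn_iff.mp hω₁ r (Set.mem_univ r)
  have h2 : ∀ r, Gfun γ lam X Y ω₂ + (1/(n:ℝ)) * Lfun b ω₂ ≤
      Gfun γ lam X Y r + (1/(n:ℝ)) * Lfun b r := by
    intro r
    have h := isMinOn_iff.mp hω₂ r (Set.mem_univ r)
    have e : ∀ s : ℝ × (Fin d → ℝ), Gfun γ lam X Y s + (1/(n:ℝ)) * Lfun b s =
        (smoothedLoss γ X Y s + lam / 2 * ∑ j, (s.2 j) ^ 2 + s.1 ^ 2 / Real.sqrt n)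
          + (b 0 * s.1 + ∑ j : Fin d, b j.succ * s.2 j) / n := by
      intro s; simp only [Gfun, Lfun]; ring
    rw [e, e]; exact h
  have A := strong_conv_min hn hγ hlam X Y b 0 ω₁ ω₂ h1
  have B := strong_conv_min hn hγ hlam X Y b (1/(n:ℝ)) ω₂ ω₁ h2
  simp only [zero_mul, add_zero] at A
  have hflip : (ω₂.1 - ω₁.1) ^ 2 + ∑ j, (ω₂.2 j - ω₁.2 j) ^ 2 = D := by
    rw [hD, show (ω₂.1 - ω₁.1) ^ 2 = (ω₁.1 - ω₂.1) ^ 2 from by ring]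
    congr 1
    exact Finset.sum_congr rfl fun j _ => by ring
  rw [hflip] at B
  rw [← hm_def] at A B
  rw [← hD] at A
  have hsum : m * D ≤ (1/(n:ℝ)) * (Lfun b ω₁ - Lfun b ω₂) := by nlinarith [A, B]
  -- bound the linear term
  have hLd : Lfun b ω₁ - Lfun b ω₂ =
      b 0 * (ω₁.1 - ω₂.1) + ∑ j : Fin d, b j.succ * (ω₁.2 j - ω₂.2 j) := by
    simp only [Lfun, mul_sub]
    rw [Finset.sum_sub_distrib]
    ring
  have hsqrtD : Real.sqrt D * Real.sqrt D = D := Real.mul_self_sqrt hD0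
  have habs1 : |ω₁.1 - ω₂.1| ≤ Real.sqrt D := by
    rw [← Real.sqrt_sq_eq_abs]
    apply Real.sqrt_le_sqrt
    rw [hD]
    exact le_add_of_nonneg_right (Finset.sum_nonneg fun j _ => sq_nonneg _)
  have habs2 : ∀ j, |ω₁.2 j - ω₂.2 j| ≤ Real.sqrt D := by
    intro j
    rw [← Real.sqrt_sq_eq_abs]
    apply Real.sqrt_le_sqrt
    rw [hD]
    have hs := Finset.single_le_sum (f := fun k => (ω₁.2 k - ω₂.2 k) ^ 2)
      (fun i _ => sq_nonneg _) (Finset.mem_univ j)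
    nlinarith [hs, sq_nonneg (ω₁.1 - ω₂.1)]
  have hLbound : Lfun b ω₁ - Lfun b ω₂ ≤ (∑ i, |b i|) * Real.sqrt D := by
    rw [hLd, Fin.sum_univ_succ, add_mul, Finset.sum_mul]
    have h0 : b 0 * (ω₁.1 - ω₂.1) ≤ |b 0| * Real.sqrt D := by
      calc b 0 * (ω₁.1 - ω₂.1) ≤ |b 0 * (ω₁.1 - ω₂.1)| := le_abs_self _
        _ = |b 0| * |ω₁.1 - ω₂.1| := abs_mul _ _
        _ ≤ |b 0| * Real.sqrt D := mul_le_mul_of_nonneg_left habs1 (abs_nonneg _)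
    have hterm : ∀ j : Fin d, b j.succ * (ω₁.2 j - ω₂.2 j) ≤ |b j.succ| * Real.sqrt D := by
      intro j
      calc b j.succ * (ω₁.2 j - ω₂.2 j) ≤ |b j.succ * (ω₁.2 j - ω₂.2 j)| := le_abs_self _
        _ = |b j.succ| * |ω₁.2 j - ω₂.2 j| := abs_mul _ _
        _ ≤ |b j.succ| * Real.sqrt D := mul_le_mul_of_nonneg_left (habs2 j) (abs_nonneg _)
    exact add_le_add h0 (Finset.sum_le_sum fun j _ => hterm j)
  have hlog : 0 ≤ Real.log (((d:ℝ) + 1) / α) := by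
    apply Real.log_nonneg
    rw [le_div_iff₀ hα.1, one_mul]
    have hd1 : (0:ℝ) ≤ (d:ℝ) := Nat.cast_nonneg d
    linarith [hα.2]
  rcases eq_or_lt_of_le (Real.sqrt_nonneg D) with hz | hpos
  · rw [← hz]
    exact div_nonneg (mul_nonneg (by positivity) hlog)
      (mul_nonneg (mul_nonneg hnpos.le hm.le) hε.le)
  · have step1 : m * Real.sqrt D ≤ (1/(n:ℝ)) * ∑ i, |b i| := by
      have hchain : m * D ≤ (1/(n:ℝ)) * ((∑ i, |b i|) * Real.sqrt D) :=
        le_trans hsum (mul_le_mul_of_nonneg_left hLbound (by positivity))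
      refine le_of_mul_le_mul_right ?_ hpos
      calc m * Real.sqrt D * Real.sqrt D = m * D := by rw [mul_assoc, hsqrtD]
        _ ≤ (1/(n:ℝ)) * ((∑ i, |b i|) * Real.sqrt D) := hchain
        _ = (1/(n:ℝ)) * (∑ i, |b i|) * Real.sqrt D := by ring
    have step2 : Real.sqrt D ≤ (∑ i, |b i|) / ((n:ℝ) * m) := by
      rw [le_div_iff₀ (mul_pos hnpos hm)]
      have hmul := mul_le_mul_of_nonneg_right step1 hnpos.le
      calc Real.sqrt D * ((n:ℝ) * m) = m * Real.sqrt D * (n:ℝ) := by ring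
        _ ≤ (1/(n:ℝ)) * (∑ i, |b i|) * (n:ℝ) := hmul
        _ = ∑ i, |b i| := by field_simp
    calc Real.sqrt D ≤ (∑ i, |b i|) / ((n:ℝ) * m) := step2
      _ ≤ (4 * ((d:ℝ) + 1) * Real.log (((d:ℝ) + 1) / α) / ε) / ((n:ℝ) * m) :=
          (div_le_div_iff_of_pos_right (mul_pos hnpos hm)).2 hb
      _ = 4 * ((d:ℝ) + 1) * Real.log (((d:ℝ) + 1) / α) / ((n:ℝ) * m * ε) := by
          rw [div_div]; ring
end

section
/- Let n ≥ 1, and let D = ((X_1,Y_1),…,(X_n,Y_n)) and D' = ((X'_1,Y'_1),…,(X'_n,Y'_n)) be two datasets with X_i, X'_i ∈ ℝ^d satisfying ‖X_i‖₁ ≤ 1 and ‖X'_i‖₁ ≤ 1, and Y_i, Y'_i ∈ ℝ, such that (X_i,Y_i) = (X'_i,Y'_i) for all but one index i. Then for every (μ,β) ∈ ℝ × ℝ^d and every coordinate k ∈ {1,…,d}, the forward directional derivatives along e_k of the two empirical losses satisfy |d_{e_k^+}F_D(μ,β) − d_{e_k^+}F_{D'}(μ,β)| ≤ 2/n. -/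
open scoped BigOperators
open Filter

/-- The median-regression loss `F_D(μ,β) = (1/n) Σ_{i=1}^n |μ + ⟨X_i,β⟩ − Y_i|`. -/
noncomputable def medLoss {n d : ℕ} (X : Fin n → Fin d → ℝ) (Y : Fin n → ℝ)
    (μ : ℝ) (β : Fin d → ℝ) : ℝ :=
  (1 / (n : ℝ)) * ∑ i, |μ + (∑ j, X i j * β j) - Y i|

/-- one-sided derivative of `τ ↦ |a + τ c|` at `0⁺`. -/
noncomputable def dsign (a c : ℝ) : ℝ :=
  if 0 < a then c else if a < 0 then -c else |c|

lemma abs_dsign (a c : ℝ) : |dsign a c| = |c| := by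
  unfold dsign
  split_ifs <;> simp [abs_neg, abs_abs]

lemma dsign_tendsto (a c : ℝ) :
    Tendsto (fun τ : ℝ => (|a + τ * c| - |a|) / τ) (nhdsWithin 0 (Set.Ioi 0))
      (nhds (dsign a c)) := by
  rcases lt_trichotomy a 0 with ha | ha | ha
  · have ha0 : 0 < |a| := abs_pos.2 ha.ne
    have hδ : 0 < |a| / (|c| + 1) := by positivity
    refine Tendsto.congr' ?_ tendsto_const_nhds
    filter_upwards [Ioo_mem_nhdsGT_of_mem (Set.left_mem_Ico.2 hδ)] with τ hτ
    obtain ⟨hτ0, hτδ⟩ := hτ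
    have hlt : τ * |c| < |a| := by
      have h1 : τ * (|c| + 1) < |a| := (lt_div_iff₀ (by positivity)).1 hτδ
      nlinarith
    have habs : a + τ * c < 0 := by
      have : τ * c ≤ τ * |c| := by
        have := le_abs_self c
        nlinarith
      have : |a| = -a := abs_of_neg ha
      linarith [hlt, ‹τ * c ≤ τ * |c|›]
    rw [dsign, if_neg (by linarith), if_pos ha]
    rw [abs_of_neg habs, abs_of_neg ha]
    field_simp
    ring
  · subst ha
    refine Tendsto.congr' ?_ tendsto_const_nhds
    filter_upwards [self_mem_nhdsWithin] with τ hτ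
    have hτ0 : 0 < τ := hτ
    rw [dsign, if_neg (lt_irrefl 0), if_neg (lt_irrefl 0)]
    rw [zero_add, abs_zero, abs_mul, abs_of_pos hτ0, sub_zero, mul_comm,
      mul_div_assoc, div_self hτ0.ne', mul_one]
  · have ha0 : 0 < |a| := abs_pos.2 ha.ne'
    have hδ : 0 < |a| / (|c| + 1) := by positivity
    refine Tendsto.congr' ?_ tendsto_const_nhds
    filter_upwards [Ioo_mem_nhdsGT_of_mem (Set.left_mem_Ico.2 hδ)] with τ hτ
    obtain ⟨hτ0, hτδ⟩ := hτ
    have hlt : τ * |c| < |a| := by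
      have h1 : τ * (|c| + 1) < |a| := (lt_div_iff₀ (by positivity)).1 hτδ
      nlinarith
    have habs : 0 < a + τ * c := by
      have : -(τ * c) ≤ τ * |c| := by
        have := neg_abs_le c
        nlinarith
      have : |a| = a := abs_of_pos ha
      linarith [hlt, ‹-(τ * c) ≤ τ * |c|›]
    rw [dsign, if_pos ha]
    rw [abs_of_pos habs, abs_of_pos ha]
    field_simp
    ring

lemma medLoss_shift {n d : ℕ} (X : Fin n → Fin d → ℝ) (Y : Fin n → ℝ)
    (μ : ℝ) (β : Fin d → ℝ) (k : Fin d) (τ : ℝ) :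
    medLoss X Y μ (β + τ • (Pi.single k 1 : Fin d → ℝ)) =
      (1 / (n : ℝ)) * ∑ i, |(μ + (∑ j, X i j * β j) - Y i) + τ * X i k| := by
  unfold medLoss
  congr 1
  refine Finset.sum_congr rfl fun i _ => ?_
  congr 1
  have : ∑ j, X i j * (β j + τ * (Pi.single k 1 : Fin d → ℝ) j)
      = (∑ j, X i j * β j) + τ * X i k := by
    rw [Finset.sum_congr rfl (fun j _ => mul_add (X i j) (β j) _),
      Finset.sum_add_distrib]
    congr 1
    have : ∀ j ∈ Finset.univ, X i j * (τ * (Pi.single k 1 : Fin d → ℝ) j)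
        = if j = k then τ * X i k else 0 := by
      intro j _
      rcases eq_or_ne j k with h | h <;> simp [h, Pi.single_apply]
      ring
    rw [Finset.sum_congr rfl this, Finset.sum_ite_eq' Finset.univ k
      (fun _ => τ * X i k)]
    simp
  simp only [Pi.add_apply, Pi.smul_apply, smul_eq_mul] at *
  rw [this]
  ring

lemma medLoss_tendsto {n d : ℕ} (hn : 1 ≤ n) (X : Fin n → Fin d → ℝ)
    (Y : Fin n → ℝ) (μ : ℝ) (β : Fin d → ℝ) (k : Fin d) :
    Tendsto
      (fun τ : ℝ =>
        (medLoss X Y μ (β + τ • (Pi.single k 1 : Fin d → ℝ))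
          - medLoss X Y μ β) / τ)
      (nhdsWithin 0 (Set.Ioi 0))
      (nhds ((1 / (n : ℝ)) * ∑ i, dsign (μ + (∑ j, X i j * β j) - Y i) (X i k))) := by
  have key : ∀ τ : ℝ,
      (medLoss X Y μ (β + τ • (Pi.single k 1 : Fin d → ℝ)) - medLoss X Y μ β) / τ
      = (1 / (n : ℝ)) * ∑ i,
          (|(μ + (∑ j, X i j * β j) - Y i) + τ * X i k|
            - |μ + (∑ j, X i j * β j) - Y i|) / τ := by
    intro τ
    rw [medLoss_shift]
    unfold medLoss
    rw [← mul_sub, ← Finset.sum_sub_distrib, mul_div_assoc, Finset.sum_div]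
  simp only [key]
  exact (tendsto_finset_sum Finset.univ fun i _ =>
    dsign_tendsto (μ + (∑ j, X i j * β j) - Y i) (X i k)).const_mul _

/-- Low sensitivity of the forward coordinate directional derivative: for two
datasets of size `n` with `‖X_i‖₁ ≤ 1`, `‖X'_i‖₁ ≤ 1`, differing in at most one
record, the forward directional derivatives along `e_k` of the two empirical
losses (which exist, by convexity) differ by at most `2/n` at every point. -/
theorem medLoss_directional_deriv_sensitivity {n d : ℕ} (hn : 1 ≤ n)
    (X X' : Fin n → Fin d → ℝ) (Y Y' : Fin n → ℝ)
    (hX : ∀ i, ∑ j, |X i j| ≤ 1) (hX' : ∀ i, ∑ j, |X' i j| ≤ 1)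
    (hneighbor : ∃ i₀ : Fin n, ∀ i : Fin n, i ≠ i₀ → X i = X' i ∧ Y i = Y' i)
    (μ : ℝ) (β : Fin d → ℝ) (k : Fin d) :
    ∃ D D' : ℝ,
      Tendsto
        (fun τ : ℝ =>
          (medLoss X Y μ (β + τ • (Pi.single k 1 : Fin d → ℝ))
            - medLoss X Y μ β) / τ)
        (nhdsWithin 0 (Set.Ioi 0)) (nhds D) ∧
      Tendsto
        (fun τ : ℝ =>
          (medLoss X' Y' μ (β + τ • (Pi.single k 1 : Fin d → ℝ))
            - medLoss X' Y' μ β) / τ)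
        (nhdsWithin 0 (Set.Ioi 0)) (nhds D') ∧
      |D - D'| ≤ 2 / n := by
  obtain ⟨i₀, hi₀⟩ := hneighbor
  set g : Fin n → ℝ := fun i => dsign (μ + (∑ j, X i j * β j) - Y i) (X i k) with hg
  set g' : Fin n → ℝ := fun i => dsign (μ + (∑ j, X' i j * β j) - Y' i) (X' i k) with hg'
  refine ⟨(1 / (n : ℝ)) * ∑ i, g i, (1 / (n : ℝ)) * ∑ i, g' i,
    medLoss_tendsto hn X Y μ β k, medLoss_tendsto hn X' Y' μ β k, ?_⟩
  have hgbd : ∀ i, |g i| ≤ 1 := by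
    intro i
    rw [hg, abs_dsign]
    calc |X i k| ≤ ∑ j, |X i j| :=
          Finset.single_le_sum (fun j _ => abs_nonneg (X i j)) (Finset.mem_univ k)
      _ ≤ 1 := hX i
  have hgbd' : ∀ i, |g' i| ≤ 1 := by
    intro i
    rw [hg', abs_dsign]
    calc |X' i k| ≤ ∑ j, |X' i j| :=
          Finset.single_le_sum (fun j _ => abs_nonneg (X' i j)) (Finset.mem_univ k)
      _ ≤ 1 := hX' i
  have hsum : ∑ i, g i - ∑ i, g' i = g i₀ - g' i₀ := by
    rw [← Finset.sum_sub_distrib]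
    refine Finset.sum_eq_single i₀ (fun i _ hi => ?_) (fun h => absurd (Finset.mem_univ i₀) h)
    obtain ⟨hXi, hYi⟩ := hi₀ i hi
    simp [hg, hg', hXi, hYi]
  have hn0 : (0 : ℝ) < n := by exact_mod_cast hn
  rw [← mul_sub, hsum, abs_mul, abs_of_pos (by positivity : (0:ℝ) < 1 / n)]
  have : |g i₀ - g' i₀| ≤ 2 := by
    calc |g i₀ - g' i₀| ≤ |g i₀| + |g' i₀| := abs_sub _ _
      _ ≤ 2 := by linarith [hgbd i₀, hgbd' i₀]
  calc 1 / (n : ℝ) * |g i₀ - g' i₀| ≤ 1 / (n : ℝ) * 2 := by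
        apply mul_le_mul_of_nonneg_left this (by positivity)
    _ = 2 / n := by ring
end
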